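/- Let 0 < δ₂ ≤ δ₁ ≤ 1 and let η, η' ∈ (0,1]. For every complex number z one has |f_{δ₁}(|z|²)·z − f_{δ₂}(|z|²)·z| ≤ (2/η)·δ₁^{η/2}·|z|^{1−η} + (2/η')·δ₁^{η'/2}·|z|^{1+η'}. -/

import Mathlib

/-- `log(1+x) ≤ x^α/α` for `x ≥ 0`, `0 < α ≤ 1`. -/
lemma log_one_add_le_rpow_div {x α : ℝ} (hx : 0 ≤ x) (hα : 0 < α) (hα1 : α ≤ 1) :
    Real.log (1 + x) ≤ x ^ α / α := by
  have h1x : (0:ℝ) < 1 + x := by linarith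
  have hsub : (1 + x) ^ α ≤ 1 + x ^ α := by
    have key := NNReal.rpow_add_le_add_rpow 1 x.toNNReal hα.le hα1
    have h2 := NNReal.coe_le_coe.2 key
    push_cast [NNReal.coe_rpow, Real.coe_toNNReal x hx] at h2
    simpa using h2
  have hlog : α * Real.log (1 + x) = Real.log ((1 + x) ^ α) := (Real.log_rpow h1x α).symm
  have h3 : Real.log ((1 + x) ^ α) ≤ Real.log (1 + x ^ α) :=
    Real.log_le_log (Real.rpow_pos_of_pos h1x α) hsub
  have h4 : Real.log (1 + x ^ α) ≤ x ^ α := by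
    have := Real.log_le_sub_one_of_pos (show (0:ℝ) < 1 + x ^ α by positivity)
    linarith
  have : α * Real.log (1 + x) ≤ x ^ α := by rw [hlog]; linarith
  rw [div_eq_inv_mul, ← mul_le_mul_iff_right₀ hα, ← mul_assoc, mul_inv_cancel₀ hα.ne', one_mul]
  linarith

/-- The regularized logarithmic nonlinearity `f_δ(r) = log((δ + r)/(1 + δ r))`. -/
noncomputable def fReg (δ r : ℝ) : ℝ := Real.log ((δ + r) / (1 + δ * r))

/-- Pointwise comparison of two regularizations: for `0 < δ₂ ≤ δ₁ ≤ 1` and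
`η, η' ∈ (0,1]`, every complex `z` satisfies
`|f_{δ₁}(|z|²) z − f_{δ₂}(|z|²) z| ≤ (2/η) δ₁^{η/2} |z|^{1−η} + (2/η') δ₁^{η'/2} |z|^{1+η'}`. -/
theorem regularized_log_comparison (δ₁ δ₂ η η' : ℝ)
    (hδ₂ : 0 < δ₂) (hδ₂₁ : δ₂ ≤ δ₁) (hδ₁ : δ₁ ≤ 1)
    (hη : η ∈ Set.Ioc (0 : ℝ) 1) (hη' : η' ∈ Set.Ioc (0 : ℝ) 1) (z : ℂ) :
    ‖(fReg δ₁ (‖z‖ ^ 2) : ℂ) * z - (fReg δ₂ (‖z‖ ^ 2) : ℂ) * z‖ ≤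
      2 / η * δ₁ ^ (η / 2) * ‖z‖ ^ (1 - η) + 2 / η' * δ₁ ^ (η' / 2) * ‖z‖ ^ (1 + η') := by
  obtain ⟨hη0, hη1⟩ := hη
  obtain ⟨hη'0, hη'1⟩ := hη'
  have hδ₁0 : 0 < δ₁ := lt_of_lt_of_le hδ₂ hδ₂₁
  rcases eq_or_ne z 0 with rfl | hz
  · simp only [norm_zero, mul_zero, sub_zero]
    positivity
  · set s : ℝ := ‖z‖ with hs_def
    have hs : 0 < s := norm_pos_iff.2 hz
    set r : ℝ := s ^ 2 with hr_def
    have hr : 0 < r := by positivity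
    have h1 : (0:ℝ) < δ₁ + r := by linarith
    have h2 : (0:ℝ) < δ₂ + r := by linarith
    have h3 : (0:ℝ) < 1 + δ₁ * r := by nlinarith
    have h4 : (0:ℝ) < 1 + δ₂ * r := by nlinarith
    have hf1 : fReg δ₁ r = Real.log (δ₁ + r) - Real.log (1 + δ₁ * r) :=
      Real.log_div h1.ne' h3.ne'
    have hf2 : fReg δ₂ r = Real.log (δ₂ + r) - Real.log (1 + δ₂ * r) :=
      Real.log_div h2.ne' h4.ne'
    set A : ℝ := Real.log (δ₁ + r) - Real.log (δ₂ + r) with hA_def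
    set B : ℝ := Real.log (1 + δ₁ * r) - Real.log (1 + δ₂ * r) with hB_def
    have hA0 : 0 ≤ A := sub_nonneg.2 (Real.log_le_log h2 (by linarith))
    have hB0 : 0 ≤ B := sub_nonneg.2 (Real.log_le_log h4 (by nlinarith))
    -- LHS as |A - B| * s
    have hLHS : ‖(fReg δ₁ r : ℂ) * z - (fReg δ₂ r : ℂ) * z‖ = |A - B| * s := by
      have he : (fReg δ₁ r : ℂ) * z - (fReg δ₂ r : ℂ) * z
          = ((fReg δ₁ r - fReg δ₂ r : ℝ) : ℂ) * z := by push_cast; ring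
      rw [he, norm_mul, Complex.norm_real, Real.norm_eq_abs, hf1, hf2]
      congr 2
      ring
    -- rpow identity: r ^ p = s ^ (2 * p)
    have hrp : ∀ p : ℝ, r ^ p = s ^ (2 * p) := by
      intro p
      rw [Real.rpow_mul hs.le]
      congr 1
      rw [hr_def, ← Real.rpow_natCast s 2]
      norm_num
    -- bound A
    have hA : A ≤ 2 / η * δ₁ ^ (η / 2) * s ^ (-η) := by
      have hlog1 : Real.log (δ₁ + r) = Real.log (1 + δ₁ / r) + Real.log r := by
        rw [← Real.log_mul (by positivity) hr.ne']
        congr 1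
        field_simp
        ring
      have hlogr : Real.log r ≤ Real.log (δ₂ + r) := Real.log_le_log hr (by linarith)
      have hkey : Real.log (1 + δ₁ / r) ≤ (δ₁ / r) ^ (η / 2) / (η / 2) :=
        log_one_add_le_rpow_div (by positivity) (by linarith) (by linarith)
      have hdiv : (δ₁ / r) ^ (η / 2) = δ₁ ^ (η / 2) / s ^ η := by
        rw [Real.div_rpow hδ₁0.le hr.le, hrp (η / 2), show 2 * (η / 2) = η by ring]
      have hsneg : s ^ (-η) = 1 / s ^ η := by
        rw [Real.rpow_neg hs.le, one_div]
      have hsη : 0 < s ^ η := Real.rpow_pos_of_pos hs η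
      calc A ≤ Real.log (1 + δ₁ / r) := by rw [hA_def, hlog1]; linarith
        _ ≤ (δ₁ / r) ^ (η / 2) / (η / 2) := hkey
        _ = 2 / η * δ₁ ^ (η / 2) * s ^ (-η) := by
            rw [hdiv, hsneg]; field_simp
    -- bound B
    have hB : B ≤ 2 / η' * δ₁ ^ (η' / 2) * s ^ η' := by
      have hkey : Real.log (1 + δ₁ * r) ≤ (δ₁ * r) ^ (η' / 2) / (η' / 2) :=
        log_one_add_le_rpow_div (by positivity) (by linarith) (by linarith)
      have hlog4 : 0 ≤ Real.log (1 + δ₂ * r) := by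
        apply Real.log_nonneg; nlinarith
      have hmul : (δ₁ * r) ^ (η' / 2) = δ₁ ^ (η' / 2) * s ^ η' := by
        rw [Real.mul_rpow hδ₁0.le hr.le, hrp (η' / 2), show 2 * (η' / 2) = η' by ring]
      calc B ≤ Real.log (1 + δ₁ * r) := by rw [hB_def]; linarith
        _ ≤ (δ₁ * r) ^ (η' / 2) / (η' / 2) := hkey
        _ = 2 / η' * δ₁ ^ (η' / 2) * s ^ η' := by rw [hmul]; field_simp
    -- combine
    rw [hLHS]
    have habs : |A - B| ≤ A + B := by rw [abs_le]; constructor <;> linarith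
    have hstep : |A - B| * s ≤ (2 / η * δ₁ ^ (η / 2) * s ^ (-η)
        + 2 / η' * δ₁ ^ (η' / 2) * s ^ η') * s := by
      apply mul_le_mul_of_nonneg_right _ hs.le
      linarith
    refine hstep.trans (le_of_eq ?_)
    have e1 : s ^ (-η) * s = s ^ (1 - η) := by
      rw [show (1 - η : ℝ) = -η + 1 by ring, Real.rpow_add hs, Real.rpow_one]
    have e2 : s ^ η' * s = s ^ (1 + η') := by
      rw [show (1 + η' : ℝ) = η' + 1 by ring, Real.rpow_add hs, Real.rpow_one]
    rw [add_mul]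
    congr 1
    · rw [mul_assoc, e1]
    · rw [mul_assoc, e2]
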